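/- The complement of G₁₃ has chromatic number 6. -/

import Mathlib

open Finset

/-- Representatives of the 13 lines through the origin in ℝ³ spanned by
nonzero `{-1,0,1}`-vectors. -/
def g13vec : Fin 13 → Fin 3 → ℤ :=
  ![![1,0,0], ![0,1,0], ![0,0,1],
    ![1,1,0], ![1,-1,0], ![1,0,1], ![1,0,-1], ![0,1,1], ![0,1,-1],
    ![1,1,1], ![1,1,-1], ![1,-1,1], ![-1,1,1]]

/-- The orthogonality graph on the 13 lines. -/
def G13 : SimpleGraph (Fin 13) :=
  SimpleGraph.fromRel (fun u v => ∑ i, g13vec u i * g13vec v i = 0)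

instance : DecidableRel G13.Adj := fun u v =>
  decidable_of_iff _ (SimpleGraph.fromRel_adj _ u v).symm

/-- Boolean adjacency. -/
def adjA : Fin 13 → Fin 13 → Bool := fun u v => G13.Adj u v

lemma adjA_iff (u v : Fin 13) : adjA u v = true ↔ G13.Adj u v := by
  simp [adjA]

/-- Every triangle of `G13` lies inside the vertices `0..8`. -/
lemma tri_lt9 : ∀ a b c : Fin 13, adjA a b → adjA a c → adjA b c → a.val < 9 := by decide

/-- `G13` has no `K₄`. -/
lemma noK4 : ∀ a b c d : Fin 13, adjA a b → adjA a c → adjA a d → adjA b c → adjA b d →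
    adjA c d → False := by decide

/-- A pure `Fin 5` counting fact: four pairwise distinct values avoiding three pairwise
distinct values cannot exist. -/
lemma fin5_fact (y₁ y₂ y₃ y₄ d₁ d₂ d₃ : Fin 5)
    (h : y₁ ≠ y₂ ∧ y₁ ≠ y₃ ∧ y₁ ≠ y₄ ∧ y₂ ≠ y₃ ∧ y₂ ≠ y₄ ∧ y₃ ≠ y₄ ∧
    d₁ ≠ d₂ ∧ d₁ ≠ d₃ ∧ d₂ ≠ d₃ ∧
    y₁ ≠ d₁ ∧ y₁ ≠ d₂ ∧ y₁ ≠ d₃ ∧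
    y₂ ≠ d₁ ∧ y₂ ≠ d₂ ∧ y₂ ≠ d₃ ∧
    y₃ ≠ d₁ ∧ y₃ ≠ d₂ ∧ y₃ ≠ d₃ ∧
    y₄ ≠ d₁ ∧ y₄ ≠ d₂ ∧ y₄ ≠ d₃) : False := by
  obtain ⟨h1,h2,h3,h4,h5,h6,h7,h8,h9,h10,h11,h12,h13,h14,h15,h16,h17,h18,h19,h20,h21⟩ := h
  have hsub : ({y₁,y₂,y₃,y₄} : Finset (Fin 5)) ⊆ ({d₁,d₂,d₃} : Finset (Fin 5))ᶜ := by
    intro x hx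
    simp only [Finset.mem_insert, Finset.mem_singleton] at hx
    rw [Finset.mem_compl]
    simp only [Finset.mem_insert, Finset.mem_singleton]
    rcases hx with rfl | rfl | rfl | rfl <;> tauto
  have hcard4 : ({y₁,y₂,y₃,y₄} : Finset (Fin 5)).card = 4 := by
    rw [Finset.card_insert_of_notMem (by simp [h1,h2,h3]),
      Finset.card_insert_of_notMem (by simp [h4,h5]),
      Finset.card_insert_of_notMem (by simp [h6]), Finset.card_singleton]
  have hcard2 : (({d₁,d₂,d₃} : Finset (Fin 5))ᶜ).card = 2 := by
    rw [Finset.card_compl]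
    rw [Finset.card_insert_of_notMem (by simp [h7,h8]),
      Finset.card_insert_of_notMem (by simp [h9]), Finset.card_singleton]
    simp
  have := Finset.card_le_card hsub
  omega

/-- An explicit 6-coloring of the complement (partition into 6 cliques of `G13`). -/
def col6 : Fin 13 → Fin 6 := ![0,0,0,1,1,2,3,4,5,3,2,4,5]

lemma colorable6 : G13ᶜ.Colorable 6 :=
  ⟨SimpleGraph.Coloring.mk col6 (by decide)⟩

lemma not_colorable5 : ¬ G13ᶜ.Colorable 5 := by
  rintro ⟨C⟩
  -- same color in a proper coloring of the complement means adjacency in G13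
  have hsame : ∀ u v : Fin 13, u ≠ v → C u = C v → adjA u v = true := by
    intro u v huv hc
    rw [adjA_iff]
    by_contra hadj
    exact C.valid ((G13.compl_adj u v).2 ⟨huv, hadj⟩) hc
  -- the color classes
  set N : Fin 5 → ℕ := fun c => ((univ : Finset (Fin 13)).filter (fun v => C v = c)).card
    with hN
  -- each class has at most 3 elements
  have hle : ∀ c, N c ≤ 3 := by
    intro c
    by_contra h
    push_neg at h
    obtain ⟨t, hts, htc⟩ := Finset.exists_subset_card_eq h
    obtain ⟨a, ha⟩ := Finset.card_pos.1 (by omega : 0 < t.card)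
    have h3 : (t.erase a).card = 3 := by
      rw [Finset.card_erase_of_mem ha, htc]
    obtain ⟨b, c', d, hbc, hbd, hcd, habc⟩ := Finset.card_eq_three.1 h3
    have hb : b ∈ t.erase a := by rw [habc]; simp
    have hc' : c' ∈ t.erase a := by rw [habc]; simp
    have hd : d ∈ t.erase a := by rw [habc]; simp
    have hcol : ∀ x ∈ t, C x = c := by
      intro x hx
      have := hts hx
      simp at this
      exact this
    have hab := Finset.ne_of_mem_erase hb
    have hac := Finset.ne_of_mem_erase hc'
    have had := Finset.ne_of_mem_erase hd
    have hat : a ∈ t := ha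
    have adj1 := hsame a b (Ne.symm hab) (by rw [hcol a hat, hcol b (Finset.mem_of_mem_erase hb)])
    have adj2 := hsame a c' (Ne.symm hac) (by rw [hcol a hat, hcol c' (Finset.mem_of_mem_erase hc')])
    have adj3 := hsame a d (Ne.symm had) (by rw [hcol a hat, hcol d (Finset.mem_of_mem_erase hd)])
    have adj4 := hsame b c' hbc (by rw [hcol b (Finset.mem_of_mem_erase hb), hcol c' (Finset.mem_of_mem_erase hc')])
    have adj5 := hsame b d hbd (by rw [hcol b (Finset.mem_of_mem_erase hb), hcol d (Finset.mem_of_mem_erase hd)])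
    have adj6 := hsame c' d hcd (by rw [hcol c' (Finset.mem_of_mem_erase hc'), hcol d (Finset.mem_of_mem_erase hd)])
    exact noK4 a b c' d adj1 adj2 adj3 adj4 adj5 adj6
  -- the class sizes sum to 13
  have hsum : ∑ c, N c = 13 := by
    have := Finset.card_eq_sum_card_fiberwise
      (f := C) (s := (univ : Finset (Fin 13))) (t := (univ : Finset (Fin 5)))
      (fun x _ => Finset.mem_univ _)
    simp only [Finset.card_univ, Fintype.card_fin] at this
    exact this.symm
  -- at least three classes have exactly 3 elements
  have hKcard : 3 ≤ ((univ : Finset (Fin 5)).filter (fun c => N c = 3)).card := by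
    have h1 : ∑ c, N c ≤ ∑ c : Fin 5, (if N c = 3 then 3 else 2) := by
      apply Finset.sum_le_sum
      intro c _
      by_cases h : N c = 3
      · simp [h]
      · have := hle c
        simp [h]
        omega
    rw [hsum] at h1
    rw [Finset.sum_ite] at h1
    simp only [Finset.sum_const, smul_eq_mul] at h1
    have h2 := Finset.card_filter_add_card_filter_not
      (s := (univ : Finset (Fin 5))) (p := fun c => N c = 3)
    simp only [Finset.card_univ, Fintype.card_fin] at h2
    omega
  -- extract three distinct colors with classes of size 3
  obtain ⟨K3, hK3sub, hK3card⟩ := Finset.exists_subset_card_eq hKcard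
  obtain ⟨c₁, c₂, c₃, h12, h13, h23, hKeq⟩ := Finset.card_eq_three.1 hK3card
  have hNc : ∀ c ∈ K3, N c = 3 := by
    intro c hc
    have := hK3sub hc
    simp at this
    exact this
  -- a vertex with index ≥ 9 cannot have a color whose class has 3 elements
  have hbig : ∀ c : Fin 5, N c = 3 → ∀ v : Fin 13, 9 ≤ v.val → C v ≠ c := by
    intro c hc v hv hCv
    obtain ⟨a, b, d, hab, had, hbd, heq⟩ := Finset.card_eq_three.1 hc
    have hmem : ∀ x, C x = c → x ∈ ({a, b, d} : Finset (Fin 13)) := by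
      intro x hx
      rw [← heq]
      simp [hx]
    have hCa : C a = c := by
      have : a ∈ ({a, b, d} : Finset (Fin 13)) := by simp
      rw [← heq] at this; simp at this; exact this
    have hCb : C b = c := by
      have : b ∈ ({a, b, d} : Finset (Fin 13)) := by simp
      rw [← heq] at this; simp at this; exact this
    have hCd : C d = c := by
      have : d ∈ ({a, b, d} : Finset (Fin 13)) := by simp
      rw [← heq] at this; simp at this; exact this
    have adj1 := hsame a b hab (by rw [hCa, hCb])
    have adj2 := hsame a d had (by rw [hCa, hCd])
    have adj3 := hsame b d hbd (by rw [hCb, hCd])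
    have hlta : a.val < 9 := tri_lt9 a b d adj1 adj2 adj3
    have hltb : b.val < 9 := tri_lt9 b a d
      (by rw [adjA_iff] at adj1 ⊢; exact adj1.symm) adj3 adj2
    have hltd : d.val < 9 := tri_lt9 d a b
      (by rw [adjA_iff] at adj2 ⊢; exact adj2.symm)
      (by rw [adjA_iff] at adj3 ⊢; exact adj3.symm) adj1
    have := hmem v hCv
    simp at this
    rcases this with h | h | h <;> subst h <;> omega
  have hc₁ : N c₁ = 3 := hNc c₁ (by rw [hKeq]; simp)
  have hc₂ : N c₂ = 3 := hNc c₂ (by rw [hKeq]; simp)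
  have hc₃ : N c₃ = 3 := hNc c₃ (by rw [hKeq]; simp)
  -- the four "diagonal" vertices 9,10,11,12 are pairwise nonadjacent in G13,
  -- hence pairwise adjacent in the complement, hence get pairwise distinct colors
  have hd12 : C 9 ≠ C 10 := C.valid (by decide)
  have hd13 : C 9 ≠ C 11 := C.valid (by decide)
  have hd14 : C 9 ≠ C 12 := C.valid (by decide)
  have hd23 : C 10 ≠ C 11 := C.valid (by decide)
  have hd24 : C 10 ≠ C 12 := C.valid (by decide)
  have hd34 : C 11 ≠ C 12 := C.valid (by decide)
  exact fin5_fact (C 9) (C 10) (C 11) (C 12) c₁ c₂ c₃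
    ⟨hd12, hd13, hd14, hd23, hd24, hd34, h12, h13, h23,
    hbig c₁ hc₁ 9 (by decide), hbig c₂ hc₂ 9 (by decide), hbig c₃ hc₃ 9 (by decide),
    hbig c₁ hc₁ 10 (by decide), hbig c₂ hc₂ 10 (by decide), hbig c₃ hc₃ 10 (by decide),
    hbig c₁ hc₁ 11 (by decide), hbig c₂ hc₂ 11 (by decide), hbig c₃ hc₃ 11 (by decide),
    hbig c₁ hc₁ 12 (by decide), hbig c₂ hc₂ 12 (by decide), hbig c₃ hc₃ 12 (by decide)⟩

theorem G13_complement_chromatic_number :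
    G13ᶜ.chromaticNumber = 6 := by
  apply le_antisymm
  · exact_mod_cast colorable6.chromaticNumber_le
  · by_contra h
    push_neg at h
    have h5 : G13ᶜ.chromaticNumber ≤ ((5 : ℕ) : ℕ∞) := by
      apply Order.le_of_lt_add_one
      have : ((5 : ℕ) : ℕ∞) + 1 = 6 := by norm_num
      rw [this]
      exact h
    exact not_colorable5 (SimpleGraph.chromaticNumber_le_iff_colorable.1 h5)
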